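/- Let 𝒜 be a pseudo 2-filtered 2-category and F a pseudofunctor from 𝒜 to Cat. Then every premorphism (u, ξ, v) : (A, x) → (A, y) is equivalent to a premorphism (u′, ξ′, v′) with u′ = v′. -/

import Mathlib

open CategoryTheory Bicategory CategoryTheory.Limits

universe w₂ v₂ u₂ w v u p p' t s t' s' t₁ s₁ t₂ s₂

namespace DubucStreet

variable {𝒜 : Type u} [Bicategory.{w, v} 𝒜]

/-- The LL equation for a pair of 2-cells `(α, β)` relative to `(γ₁, γ₂)`. -/
def LLeq {E A B C₁ C₂ C : 𝒜} (f : E ⟶ A) (g : E ⟶ B)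
    {u₁ : A ⟶ C₁} {v₁ : B ⟶ C₁} {u₂ : A ⟶ C₂} {v₂ : B ⟶ C₂}
    (γ₁ : f ≫ u₁ ⟶ g ≫ v₁) (γ₂ : f ≫ u₂ ⟶ g ≫ v₂)
    (w₁ : C₁ ⟶ C) (w₂ : C₂ ⟶ C)
    (α : v₁ ≫ w₁ ⟶ v₂ ≫ w₂) (β : u₁ ≫ w₁ ⟶ u₂ ≫ w₂) : Prop :=
  (α_ f u₁ w₁).inv ≫ (γ₁ ▷ w₁) ≫ (α_ g v₁ w₁).hom ≫ (g ◁ α) =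
    (f ◁ β) ≫ (α_ f u₂ w₂).inv ≫ (γ₂ ▷ w₂) ≫ (α_ g v₂ w₂).hom

/-- Axiom F1 : every cospan of 1-cells can be completed to a square with an
invertible 2-cell. -/
def AxiomF1 (𝒜 : Type u) [Bicategory.{w, v} 𝒜] : Prop :=
  ∀ {E A B : 𝒜} (f : E ⟶ A) (g : E ⟶ B),
    ∃ (C : 𝒜) (u : A ⟶ C) (v : B ⟶ C), Nonempty (f ≫ u ≅ g ≫ v)

/-- Axiom F2 : any two 2-cells as below can be equalized by a pair of invertible
2-cells satisfying the LL equation. -/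
def AxiomF2 (𝒜 : Type u) [Bicategory.{w, v} 𝒜] : Prop :=
  ∀ {E A B C₁ C₂ : 𝒜} {f : E ⟶ A} {g : E ⟶ B}
    {u₁ : A ⟶ C₁} {v₁ : B ⟶ C₁} {u₂ : A ⟶ C₂} {v₂ : B ⟶ C₂}
    (γ₁ : f ≫ u₁ ⟶ g ≫ v₁) (γ₂ : f ≫ u₂ ⟶ g ≫ v₂),
    ∃ (C : 𝒜) (w₁ : C₁ ⟶ C) (w₂ : C₂ ⟶ C)
      (α : v₁ ≫ w₁ ≅ v₂ ≫ w₂) (β : u₁ ≫ w₁ ≅ u₂ ≫ w₂),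
      LLeq f g γ₁ γ₂ w₁ w₂ α.hom β.hom

/-- Axiom FF1 : two cospans with the same feet can be simultaneously completed to
squares with invertible 2-cells. -/
def AxiomFF1 (𝒜 : Type u) [Bicategory.{w, v} 𝒜] : Prop :=
  ∀ {E₁ E₂ A B : 𝒜} (f₁ : E₁ ⟶ A) (g₁ : E₁ ⟶ B) (f₂ : E₂ ⟶ A) (g₂ : E₂ ⟶ B),
    ∃ (C : 𝒜) (u : A ⟶ C) (v : B ⟶ C),
      Nonempty (f₁ ≫ u ≅ g₁ ≫ v) ∧ Nonempty (f₂ ≫ u ≅ g₂ ≫ v)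

/-- Axiom F0 : every pair of objects admits a cospan. -/
def AxiomF0 (𝒜 : Type u) [Bicategory.{w, v} 𝒜] : Prop :=
  ∀ (A B : 𝒜), ∃ (C : 𝒜), Nonempty (A ⟶ C) ∧ Nonempty (B ⟶ C)

/-- A premorphism `(A, x) → (B, y)` : a cospan `u : A ⟶ C`, `v : B ⟶ C` together with a
morphism `ξ : F(u)(x) ⟶ F(v)(y)` in `F(C)`. -/
structure Premor (F : Pseudofunctor 𝒜 Cat.{v₂, u₂}) (A B : 𝒜) (x : F.obj A) (y : F.obj B) where
  cod : 𝒜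
  u : A ⟶ cod
  v : B ⟶ cod
  ξ : (F.map u).toFunctor.obj x ⟶ (F.map v).toFunctor.obj y

/-- The LL equation for homotopy data `(w₁, w₂, α, β)` between two premorphisms :
`F(w₁)(ξ₁) ≫ F(α)_y = F(β)_x ≫ F(w₂)(ξ₂)`, all identifications being made via the
compositor isomorphisms of `F`. -/
def HomotopyLL (F : Pseudofunctor 𝒜 Cat.{v₂, u₂}) {A B : 𝒜} {x : F.obj A} {y : F.obj B}
    (p q : Premor F A B x y) {V : 𝒜} (w₁ : p.cod ⟶ V) (w₂ : q.cod ⟶ V)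
    (α : p.v ≫ w₁ ⟶ q.v ≫ w₂) (β : p.u ≫ w₁ ⟶ q.u ≫ w₂) : Prop :=
  (F.map w₁).toFunctor.map p.ξ ≫ (F.mapComp p.v w₁).inv.toNatTrans.app y ≫ (F.map₂ α).toNatTrans.app y ≫
      (F.mapComp q.v w₂).hom.toNatTrans.app y =
    (F.mapComp p.u w₁).inv.toNatTrans.app x ≫ (F.map₂ β).toNatTrans.app x ≫ (F.mapComp q.u w₂).hom.toNatTrans.app x ≫
      (F.map w₂).toFunctor.map q.ξ

/-- A homotopy `(w₁, w₂, α, β)` between two premorphisms. -/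
structure Homotopy (F : Pseudofunctor 𝒜 Cat.{v₂, u₂}) {A B : 𝒜} {x : F.obj A} {y : F.obj B}
    (p q : Premor F A B x y) where
  vertex : 𝒜
  w₁ : p.cod ⟶ vertex
  w₂ : q.cod ⟶ vertex
  α : p.v ≫ w₁ ≅ q.v ≫ w₂
  β : p.u ≫ w₁ ≅ q.u ≫ w₂
  ll : HomotopyLL F p q w₁ w₂ α.hom β.hom

/-- Two premorphisms are equivalent when there is a homotopy from one to the other. -/
def PreEquiv (F : Pseudofunctor 𝒜 Cat.{v₂, u₂}) {A B : 𝒜} {x : F.obj A} {y : F.obj B}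
    (p q : Premor F A B x y) : Prop :=
  Nonempty (Homotopy F p q)

/-- In a pseudo 2-filtered 2-category, every premorphism `(A, x) → (A, y)` is
equivalent to a premorphism whose two legs coincide. -/
theorem premorphism_equivalent_to_diagonal [Bicategory.Strict 𝒜]
    (hFF1 : AxiomFF1 𝒜) (hF2 : AxiomF2 𝒜)
    (F : Pseudofunctor 𝒜 Cat.{v₂, u₂}) {A : 𝒜} {x y : F.obj A}
    (p : Premor F A A x y) :
    ∃ q : Premor F A A x y, q.u = q.v ∧ PreEquiv F p q := by
  obtain ⟨D, s, t, ⟨γ⟩, ⟨δ⟩⟩ := hFF1 p.u p.v (𝟙 p.cod) (𝟙 p.cod)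
  -- From `δ : 𝟙 ≫ s ≅ 𝟙 ≫ t` and strictness we get `t ≅ s`.
  have hts : t ≅ s := eqToIso (by simp) ≪≫ δ.symm ≪≫ eqToIso (by simp)
  -- an invertible 2-cell `θ : p.u ≫ s ≅ p.v ≫ s`
  let θ : p.u ≫ s ≅ p.v ≫ s := γ ≪≫ whiskerLeftIso p.v hts
  let r : A ⟶ D := p.v ≫ s
  let β : p.u ≫ s ≅ r ≫ 𝟙 D := θ ≪≫ eqToIso (by simp [r])
  let α : p.v ≫ s ≅ r ≫ 𝟙 D := eqToIso (by simp [r])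
  -- the diagonal premorphism
  let ξ' : (F.map r).toFunctor.obj x ⟶ (F.map r).toFunctor.obj y :=
    (F.mapId D).inv.toNatTrans.app ((F.map r).toFunctor.obj x) ≫ (F.mapComp r (𝟙 D)).inv.toNatTrans.app x ≫
      (F.map₂ β.inv).toNatTrans.app x ≫ (F.mapComp p.u s).hom.toNatTrans.app x ≫ (F.map s).toFunctor.map p.ξ ≫
      (F.mapComp p.v s).inv.toNatTrans.app y ≫ (F.map₂ α.hom).toNatTrans.app y ≫
      (F.mapComp r (𝟙 D)).hom.toNatTrans.app y ≫ (F.mapId D).hom.toNatTrans.app ((F.map r).toFunctor.obj y)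
  refine ⟨⟨D, r, r, ξ'⟩, rfl, ⟨⟨D, s, 𝟙 D, α, β, ?_⟩⟩⟩
  show (F.map s).toFunctor.map p.ξ ≫ (F.mapComp p.v s).inv.toNatTrans.app y ≫ (F.map₂ α.hom).toNatTrans.app y ≫
      (F.mapComp r (𝟙 D)).hom.toNatTrans.app y =
    (F.mapComp p.u s).inv.toNatTrans.app x ≫ (F.map₂ β.hom).toNatTrans.app x ≫ (F.mapComp r (𝟙 D)).hom.toNatTrans.app x ≫
      (F.map (𝟙 D)).toFunctor.map ξ'
  have hnat : (F.map (𝟙 D)).toFunctor.map ξ' =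
      (F.mapId D).hom.toNatTrans.app ((F.map r).toFunctor.obj x) ≫ ξ' ≫ (F.mapId D).inv.toNatTrans.app ((F.map r).toFunctor.obj y) := by
    have h := (F.mapId D).hom.toNatTrans.naturality ξ'
    simp only [Cat.Hom.id_map] at h
    conv_rhs => rw [← Category.assoc, ← h, Category.assoc]
    rw [Cat.Hom.hom_inv_id_toNatTrans_app, Category.comp_id]
  rw [hnat]
  simp only [ξ', Category.assoc, Cat.Hom.hom_inv_id_toNatTrans_app_assoc, Cat.Hom.inv_hom_id_toNatTrans_app_assoc,
    Cat.Hom.hom_inv_id_toNatTrans_app, Category.comp_id]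
  rw [← Cat.Hom₂.comp_app_assoc (F.map₂ β.hom) (F.map₂ β.inv), ← F.map₂_comp,
    Iso.hom_inv_id, F.map₂_id]
  simp


end DubucStreet
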